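/- arXiv:2310.15092 — 8 statements merged into one kernel-verified Lean document; each statement's English description precedes it below -/
import Mathlib

section
/- Let G be a finite group, F a field, A ∈ Mat_{m_A × n_A}(F[G]) and B ∈ Mat_{m_B × n_B}(F[G]). Then the flattened lifted-product parity-check matrices over F satisfy the CSS orthogonality condition H_X · H_Zᵀ = 0. -/
open Matrix

/-- The flattened lifted-product parity-check matrix `H_X` over `F`, associated with
`A ∈ Mat_{m_A×n_A}(F[G])` and `B ∈ Mat_{m_B×n_B}(F[G])`:
the block matrix `[♮A ⊗ I_{m_B}, −I_{m_A} ⊗ B♮]`, where `♮A` replaces each entry `a` by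
`L(a)ᵀ` and `B♮` replaces each entry `b` by `R(b)`. -/
def liftedHX {F : Type*} [Field F] {G : Type*} [Group G] {mA nA mB nB : ℕ}
    (A : Matrix (Fin mA) (Fin nA) (MonoidAlgebra F G))
    (B : Matrix (Fin mB) (Fin nB) (MonoidAlgebra F G)) :
    Matrix ((Fin mA × Fin mB) × G) (((Fin nA × Fin mB) ⊕ (Fin mA × Fin nB)) × G) F :=
  Matrix.of fun p q =>
    match p, q with
    | ((i, k), g), (Sum.inl (j, k'), h) => if k = k' then (A i j).coeff (h * g⁻¹) else 0
    | ((i, k), g), (Sum.inr (i', j), h) => if i = i' then -((B k j).coeff (h⁻¹ * g)) else 0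

/-- The flattened lifted-product parity-check matrix `H_Z` over `F`, associated with
`A ∈ Mat_{m_A×n_A}(F[G])` and `B ∈ Mat_{m_B×n_B}(F[G])`:
the block matrix `[I_{n_A} ⊗ (B♮)ᵀ, (♮A)ᵀ ⊗ I_{n_B}]`. -/
def liftedHZ {F : Type*} [Field F] {G : Type*} [Group G] {mA nA mB nB : ℕ}
    (A : Matrix (Fin mA) (Fin nA) (MonoidAlgebra F G))
    (B : Matrix (Fin mB) (Fin nB) (MonoidAlgebra F G)) :
    Matrix ((Fin nA × Fin nB) × G) (((Fin nA × Fin mB) ⊕ (Fin mA × Fin nB)) × G) F :=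
  Matrix.of fun p q =>
    match p, q with
    | ((j, l), g), (Sum.inl (j', k), h) => if j = j' then (B k l).coeff (g⁻¹ * h) else 0
    | ((j, l), g), (Sum.inr (i, l'), h) => if l = l' then (A i j).coeff (g * h⁻¹) else 0

/-- The flattened lifted-product parity-check matrices satisfy the CSS orthogonality
condition `H_X * H_Zᵀ = 0`. -/
theorem liftedHX_mul_liftedHZ_transpose {F : Type*} [Field F]
    {G : Type*} [Group G] [Fintype G] {mA nA mB nB : ℕ}
    (A : Matrix (Fin mA) (Fin nA) (MonoidAlgebra F G))
    (B : Matrix (Fin mB) (Fin nB) (MonoidAlgebra F G)) :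
    liftedHX A B * (liftedHZ A B)ᵀ = 0 := by
  ext ⟨⟨i, k⟩, g⟩ ⟨⟨j, l⟩, g'⟩
  simp only [Matrix.mul_apply, Matrix.transpose_apply, liftedHX, liftedHZ, Matrix.of_apply,
    Matrix.zero_apply, Fintype.sum_prod_type]
  rw [Fintype.sum_sum_type]
  simp only [Fintype.sum_prod_type, ite_mul, mul_ite, zero_mul, mul_zero,
    Finset.sum_ite_irrel, Finset.sum_const_zero, Finset.sum_ite_eq, Finset.sum_ite_eq',
    Finset.mem_univ, if_true, neg_mul]
  rw [Finset.sum_neg_distrib, add_neg_eq_zero]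
  refine Fintype.sum_equiv (((Equiv.inv G).trans (Equiv.mulLeft g)).trans (Equiv.mulRight g')) _ _ fun x => ?_
  simp only [Equiv.trans_apply, Equiv.inv_apply, Equiv.coe_mulLeft, Equiv.coe_mulRight,
    _root_.mul_inv_rev, inv_inv]
  rw [mul_comm]
  congr 2 <;> group
end

section
/- Let R be a commutative ring, A : Matrix (Fin m_A) (Fin n_A) R and B : Matrix (Fin m_B) (Fin n_B) R. Define H_X = [A ⊗ I_{m_B}, −(I_{m_A} ⊗ B)] (the matrix with column blocks A ⊗ I_{m_B} and −(I_{m_A} ⊗ B)) and H_Z = [I_{n_A} ⊗ Bᵀ, Aᵀ ⊗ I_{n_B}]. Then H_X · H_Zᵀ = 0. -/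
open Matrix
open Kronecker

/-- Let `R` be a commutative ring, `A : Matrix (Fin m_A) (Fin n_A) R` and
`B : Matrix (Fin m_B) (Fin n_B) R`. With `H_X = [A ⊗ I_{m_B}, −(I_{m_A} ⊗ B)]` and
`H_Z = [I_{n_A} ⊗ Bᵀ, Aᵀ ⊗ I_{n_B}]` we have `H_X * H_Zᵀ = 0`. -/
theorem fromColumns_kronecker_orthogonality {R : Type*} [CommRing R] {mA nA mB nB : ℕ}
    (A : Matrix (Fin mA) (Fin nA) R) (B : Matrix (Fin mB) (Fin nB) R) :
    Matrix.fromCols (A ⊗ₖ (1 : Matrix (Fin mB) (Fin mB) R))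
        (-((1 : Matrix (Fin mA) (Fin mA) R) ⊗ₖ B)) *
      (Matrix.fromCols ((1 : Matrix (Fin nA) (Fin nA) R) ⊗ₖ Bᵀ)
        (Aᵀ ⊗ₖ (1 : Matrix (Fin nB) (Fin nB) R)))ᵀ = 0 := by
  rw [transpose_fromCols, fromCols_mul_fromRows,
    ← kroneckerMap_transpose, ← kroneckerMap_transpose]
  simp only [transpose_one, transpose_transpose, ← mul_kronecker_mul,
    Matrix.one_mul, Matrix.mul_one, Matrix.neg_mul]
  abel
end

section
/- Let F be a field and A, B : Matrix (Fin m) (Fin m) F, and set k_A = m − rank(A) and k_B = m − rank(B) (the dimensions of the kernels of the induced linear maps). Let H_X = [A ⊗ I_m, −(I_m ⊗ B)] and H_Z = [I_m ⊗ Bᵀ, Aᵀ ⊗ I_m]. Then rank(H_X) = m² − k_A·k_B and rank(H_Z) = m² − k_A·k_B (equivalently, rank(H_X) + k_A·k_B = m² and rank(H_Z) + k_A·k_B = m²). -/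
open Matrix
open Kronecker

open Module Submodule LinearMap

section Aux

variable {F : Type*} [Field F] {m : ℕ}

/-- Matrices all of whose rows lie in `U`. -/
def rowsIn (U : Submodule F (Fin m → F)) : Submodule F (Matrix (Fin m) (Fin m) F) where
  carrier := {X | ∀ i, X i ∈ U}
  add_mem' := fun ha hb i => add_mem (ha i) (hb i)
  zero_mem' := fun _ => zero_mem U
  smul_mem' := fun c _ h i => smul_mem U c (h i)

/-- Matrices all of whose columns lie in `W`. -/
def colsIn (W : Submodule F (Fin m → F)) : Submodule F (Matrix (Fin m) (Fin m) F) where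
  carrier := {X | ∀ j, (fun i => X i j) ∈ W}
  add_mem' := fun ha hb j => add_mem (ha j) (hb j)
  zero_mem' := fun _ => zero_mem W
  smul_mem' := fun c _ h j => smul_mem W c (h j)

lemma mem_rowsIn {U : Submodule F (Fin m → F)} {X : Matrix (Fin m) (Fin m) F} :
    X ∈ rowsIn U ↔ ∀ i, X i ∈ U := Iff.rfl

lemma mem_colsIn {W : Submodule F (Fin m → F)} {X : Matrix (Fin m) (Fin m) F} :
    X ∈ colsIn W ↔ ∀ j, (fun i => X i j) ∈ W := Iff.rfl

lemma rowsIn_top : rowsIn (⊤ : Submodule F (Fin m → F)) = ⊤ := by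
  ext X; simp [mem_rowsIn]

lemma colsIn_top : colsIn (⊤ : Submodule F (Fin m → F)) = ⊤ := by
  ext X; simp [mem_colsIn]

/-- Applying a linear automorphism of `Fin m → F` to each row of a matrix. -/
def rowMap (g : (Fin m → F) ≃ₗ[F] (Fin m → F)) :
    Matrix (Fin m) (Fin m) F ≃ₗ[F] Matrix (Fin m) (Fin m) F where
  toFun X := Matrix.of fun i => g (X i)
  invFun X := Matrix.of fun i => g.symm (X i)
  map_add' X Y := by
    ext i j
    show g ((X + Y) i) j = (g (X i) + g (Y i)) j
    rw [show (X + Y) i = X i + Y i from rfl, map_add]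
  map_smul' c X := by
    ext i j
    show g ((c • X) i) j = (c • g (X i)) j
    rw [show (c • X) i = c • X i from rfl, _root_.map_smul]
  left_inv X := by
    ext i j
    show g.symm (g (X i)) j = X i j
    rw [g.symm_apply_apply]
  right_inv X := by
    ext i j
    show g (g.symm (X i)) j = X i j
    rw [g.apply_symm_apply]

lemma rowMap_mem_rowsIn {U : Submodule F (Fin m → F)} {g : (Fin m → F) ≃ₗ[F] (Fin m → F)}
    {X : Matrix (Fin m) (Fin m) F} (h : ∀ i, X i ∈ U) (i : Fin m) :
    rowMap g X i ∈ Submodule.map g.toLinearMap U := ⟨X i, h i, rfl⟩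

lemma rowMap_mem_colsIn {W : Submodule F (Fin m → F)} (g : (Fin m → F) ≃ₗ[F] (Fin m → F))
    {X : Matrix (Fin m) (Fin m) F} (h : X ∈ colsIn W) : rowMap g X ∈ colsIn W := by
  intro j
  set G := LinearMap.toMatrix' (g : (Fin m → F) →ₗ[F] (Fin m → F)) with hG
  have hg : ∀ v : Fin m → F, g v = G.mulVec v := by
    intro v
    rw [hG, ← Matrix.toLin'_apply, Matrix.toLin'_toMatrix']
    rfl
  have : (fun i => rowMap g X i j) = ∑ k : Fin m, G j k • (fun i => X i k) := by
    funext i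
    simp only [rowMap, LinearEquiv.coe_mk, Matrix.of_apply, hg, Matrix.mulVec, dotProduct]
    rw [Finset.sum_apply]
    simp [mul_comm]
    exact dotProduct_comm _ _
  rw [this]
  exact Submodule.sum_mem _ fun k _ => Submodule.smul_mem _ _ (h k)

lemma map_rowMap_inf {U W : Submodule F (Fin m → F)} {U' : Submodule F (Fin m → F)}
    (g : (Fin m → F) ≃ₗ[F] (Fin m → F)) (hg : Submodule.map g.toLinearMap U' = U) :
    Submodule.map (rowMap g : Matrix (Fin m) (Fin m) F ≃ₗ[F] _).toLinearMap (rowsIn U' ⊓ colsIn W)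
      = rowsIn U ⊓ colsIn W := by
  apply le_antisymm
  · rintro _ ⟨Y, ⟨hr, hc⟩, rfl⟩
    refine ⟨fun i => ?_, rowMap_mem_colsIn g hc⟩
    rw [← hg]; exact rowMap_mem_rowsIn hr i
  · rintro X ⟨hr, hc⟩
    refine ⟨rowMap g.symm X, ⟨fun i => ?_, rowMap_mem_colsIn g.symm hc⟩, ?_⟩
    · have : X i ∈ Submodule.map g.toLinearMap U' := by rw [hg]; exact hr i
      obtain ⟨u, hu, hux⟩ := this
      show g.symm (X i) ∈ U'
      rw [← hux, LinearEquiv.coe_coe, g.symm_apply_apply]; exact hu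
    · show rowMap g (rowMap g.symm X) = X
      ext i j
      show g (g.symm (X i)) j = X i j
      rw [g.apply_symm_apply]

/-- Transpose as a linear equivalence swaps row and column conditions. -/
lemma map_transpose_inf (U W : Submodule F (Fin m → F)) :
    Submodule.map (Matrix.transposeLinearEquiv (Fin m) (Fin m) F F).toLinearMap
      (rowsIn U ⊓ colsIn W) = rowsIn W ⊓ colsIn U := by
  apply le_antisymm
  · rintro _ ⟨Y, ⟨hr, hc⟩, rfl⟩
    exact ⟨fun i => hc i, fun j => hr j⟩
  · rintro X ⟨hr, hc⟩
    exact ⟨Xᵀ, ⟨fun i => hc i, fun j => hr j⟩, by ext i j; rfl⟩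

/-- The coordinate subspace of vectors supported on indices `< r`. -/
def coordSub (r : ℕ) : Submodule F (Fin m → F) where
  carrier := {v | ∀ j : Fin m, r ≤ (j : ℕ) → v j = 0}
  add_mem' := fun ha hb j hj => by simp [ha j hj, hb j hj]
  zero_mem' := fun _ _ => rfl
  smul_mem' := fun c v h j hj => by simp [h j hj]

lemma card_subtype_fin_lt (r : ℕ) (hr : r ≤ m) :
    Fintype.card {j : Fin m // (j : ℕ) < r} = r := by
  exact (Fintype.card_congr
    ⟨fun x => (⟨x.1.1, x.2⟩ : Fin r), fun i => ⟨⟨i.1, lt_of_lt_of_le i.2 hr⟩, i.2⟩,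
     fun x => by ext; rfl, fun i => by ext; rfl⟩).trans (Fintype.card_fin r)

lemma finrank_coordSub (r : ℕ) (hr : r ≤ m) :
    finrank F (coordSub r : Submodule F (Fin m → F)) = r := by
  have e : (coordSub r : Submodule F (Fin m → F)) ≃ₗ[F] ({j : Fin m // (j : ℕ) < r} → F) :=
    { toFun := fun v j => v.1 j.1
      invFun := fun f => ⟨fun j => if h : (j : ℕ) < r then f ⟨j, h⟩ else 0,
        fun j hj => by simp [Nat.not_lt.mpr hj]⟩
      map_add' := fun v w => rfl
      map_smul' := fun c v => rfl
      left_inv := fun v => by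
        ext j
        by_cases h : (j : ℕ) < r
        · simp [h]
        · simp [h, v.2 j (Nat.not_lt.mp h)]
      right_inv := fun f => by
        ext j
        simp [j.2] }
  rw [e.finrank_eq, finrank_pi, card_subtype_fin_lt r hr]

/-- Base case: matrices supported on a coordinate rectangle. -/
lemma finrank_base (r s : ℕ) (hr : r ≤ m) (hs : s ≤ m) :
    finrank F ((rowsIn (coordSub r) ⊓ colsIn (coordSub s) :
      Submodule F (Matrix (Fin m) (Fin m) F))) = s * r := by
  have e : ((rowsIn (coordSub r) ⊓ colsIn (coordSub s) :
      Submodule F (Matrix (Fin m) (Fin m) F)))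
        ≃ₗ[F] (({i : Fin m // (i : ℕ) < s} × {j : Fin m // (j : ℕ) < r}) → F) :=
    { toFun := fun X p => X.1 p.1.1 p.2.1
      invFun := fun f => ⟨Matrix.of fun i j =>
          if h : (i : ℕ) < s ∧ (j : ℕ) < r then f (⟨i, h.1⟩, ⟨j, h.2⟩) else 0,
        ⟨fun i j hj => by
            rw [Matrix.of_apply, dif_neg (fun h => absurd hj (Nat.not_le.mpr h.2))],
         fun j i hi => by
            dsimp only
            rw [Matrix.of_apply, dif_neg (fun h => absurd hi (Nat.not_le.mpr h.1))]⟩⟩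
      map_add' := fun v w => rfl
      map_smul' := fun c v => rfl
      left_inv := fun X => by
        ext i j
        dsimp only
        rw [Matrix.of_apply]
        by_cases h : (i : ℕ) < s ∧ (j : ℕ) < r
        · rw [dif_pos h]
        · rw [dif_neg h]
          rcases Decidable.not_and_iff_or_not.mp h with h1 | h1
          · exact (X.2.2 j i (Nat.not_lt.mp h1)).symm
          · exact (X.2.1 i j (Nat.not_lt.mp h1)).symm
      right_inv := fun f => by
        ext p
        dsimp only
        rw [Matrix.of_apply, dif_pos ⟨p.1.2, p.2.2⟩] }
  rw [e.finrank_eq, finrank_pi, Fintype.card_prod, card_subtype_fin_lt r hr,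
    card_subtype_fin_lt s hs]

lemma finrank_fun : finrank F (Fin m → F) = m := by
  rw [finrank_pi, Fintype.card_fin]

lemma exists_auto (U : Submodule F (Fin m → F)) :
    ∃ g : (Fin m → F) ≃ₗ[F] (Fin m → F),
      Submodule.map g.toLinearMap (coordSub (finrank F U)) = U := by
  set r := finrank F U with hrdef
  have hrm : r ≤ m := by
    have := U.finrank_le
    rwa [finrank_fun] at this
  obtain ⟨U', hU'⟩ := U.exists_isCompl
  obtain ⟨C', hC'⟩ := (coordSub r : Submodule F (Fin m → F)).exists_isCompl
  have h1 : finrank F (coordSub r : Submodule F (Fin m → F)) = finrank F U := by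
    rw [finrank_coordSub r hrm]
  have h2 : finrank F C' = finrank F U' := by
    have a1 := Submodule.finrank_add_eq_of_isCompl hC'
    have a2 := Submodule.finrank_add_eq_of_isCompl hU'
    rw [finrank_coordSub r hrm] at a1
    omega
  let e₁ : (coordSub r : Submodule F (Fin m → F)) ≃ₗ[F] U := LinearEquiv.ofFinrankEq _ _ h1
  let e₂ : C' ≃ₗ[F] U' := LinearEquiv.ofFinrankEq _ _ h2
  let g := ((Submodule.prodEquivOfIsCompl _ _ hC').symm.trans (e₁.prodCongr e₂)).trans
    (Submodule.prodEquivOfIsCompl _ _ hU')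
  have key : ∀ x : (coordSub r : Submodule F (Fin m → F)), g x = (e₁ x : Fin m → F) := by
    intro x
    show Submodule.prodEquivOfIsCompl _ _ hU'
      ((e₁.prodCongr e₂) ((Submodule.prodEquivOfIsCompl _ _ hC').symm x)) = _
    rw [Submodule.prodEquivOfIsCompl_symm_apply_left _ _ hC' x]
    show (e₁ x : Fin m → F) + (e₂ 0 : Fin m → F) = _
    rw [e₂.map_zero]
    simp
  refine ⟨g, le_antisymm ?_ ?_⟩
  · rintro _ ⟨x, hx, rfl⟩
    rw [LinearEquiv.coe_coe, key ⟨x, hx⟩]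
    exact (e₁ ⟨x, hx⟩).2
  · intro u hu
    refine ⟨(e₁.symm ⟨u, hu⟩ : Fin m → F), (e₁.symm ⟨u, hu⟩).2, ?_⟩
    rw [LinearEquiv.coe_coe, key (e₁.symm ⟨u, hu⟩)]
    simp

/-- Core dimension formula: matrices with rows in `U` and columns in `W`. -/
lemma finrank_rowsIn_inf_colsIn (U W : Submodule F (Fin m → F)) :
    finrank F ((rowsIn U ⊓ colsIn W : Submodule F (Matrix (Fin m) (Fin m) F)))
      = finrank F U * finrank F W := by
  have hUm : finrank F U ≤ m := by have := U.finrank_le; rwa [finrank_fun] at this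
  have hWm : finrank F W ≤ m := by have := W.finrank_le; rwa [finrank_fun] at this
  obtain ⟨g, hg⟩ := exists_auto U
  obtain ⟨h, hh⟩ := exists_auto W
  calc finrank F ((rowsIn U ⊓ colsIn W : Submodule F (Matrix (Fin m) (Fin m) F)))
      = finrank F ((rowsIn (coordSub (finrank F U)) ⊓ colsIn W :
          Submodule F (Matrix (Fin m) (Fin m) F))) := by
        rw [← map_rowMap_inf g hg, LinearEquiv.finrank_map_eq]
    _ = finrank F ((rowsIn W ⊓ colsIn (coordSub (finrank F U)) :
          Submodule F (Matrix (Fin m) (Fin m) F))) := by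
        rw [← map_transpose_inf, LinearEquiv.finrank_map_eq]
    _ = finrank F ((rowsIn (coordSub (finrank F W)) ⊓ colsIn (coordSub (finrank F U)) :
          Submodule F (Matrix (Fin m) (Fin m) F))) := by
        rw [← map_rowMap_inf h hh, LinearEquiv.finrank_map_eq]
    _ = finrank F U * finrank F W := finrank_base _ _ hWm hUm

/-- Left multiplication by `A` on matrices. -/
def lmulL (A : Matrix (Fin m) (Fin m) F) :
    Matrix (Fin m) (Fin m) F →ₗ[F] Matrix (Fin m) (Fin m) F where
  toFun X := A * X
  map_add' X Y := Matrix.mul_add A X Y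
  map_smul' c X := (Matrix.mul_smul A c X).trans rfl

/-- Right multiplication by `Cᵀ` on matrices. -/
def rmulT (C : Matrix (Fin m) (Fin m) F) :
    Matrix (Fin m) (Fin m) F →ₗ[F] Matrix (Fin m) (Fin m) F where
  toFun X := X * Cᵀ
  map_add' X Y := Matrix.add_mul X Y Cᵀ
  map_smul' c X := (Matrix.smul_mul c X Cᵀ).trans rfl

lemma range_lmulL (A : Matrix (Fin m) (Fin m) F) :
    LinearMap.range (lmulL A) = colsIn (LinearMap.range A.mulVecLin) := by
  apply le_antisymm
  · rintro _ ⟨Y, rfl⟩ j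
    refine ⟨fun k => Y k j, ?_⟩
    funext i
    simp [Matrix.mulVecLin_apply, Matrix.mulVec, dotProduct, Matrix.mul_apply, lmulL]
  · intro X hX
    choose y hy using hX
    refine ⟨Matrix.of fun k j => y j k, ?_⟩
    ext i j
    have := congrFun (hy j) i
    simp only [Matrix.mulVecLin_apply] at this
    simp only [lmulL, LinearMap.coe_mk, AddHom.coe_mk, Matrix.mul_apply, Matrix.of_apply]
    rw [← this]
    simp [Matrix.mulVec, dotProduct]

lemma range_rmulT (C : Matrix (Fin m) (Fin m) F) :
    LinearMap.range (rmulT C) = rowsIn (LinearMap.range C.mulVecLin) := by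
  apply le_antisymm
  · rintro _ ⟨Y, rfl⟩ i
    refine ⟨Y i, ?_⟩
    funext j
    simp [Matrix.mulVecLin_apply, Matrix.mulVec, dotProduct, Matrix.mul_apply,
      Matrix.transpose_apply, rmulT, mul_comm]
  · intro X hX
    choose y hy using hX
    refine ⟨Matrix.of fun i k => y i k, ?_⟩
    ext i j
    have := congrFun (hy i) j
    simp only [Matrix.mulVecLin_apply] at this
    simp only [rmulT, LinearMap.coe_mk, AddHom.coe_mk, Matrix.mul_apply,
      Matrix.transpose_apply, Matrix.of_apply]
    rw [← this]
    simp [Matrix.mulVec, dotProduct, mul_comm]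

/-- Currying equivalence between vectors indexed by pairs and matrices. -/
def curryM : ((Fin m × Fin m) → F) ≃ₗ[F] Matrix (Fin m) (Fin m) F where
  toFun v := Matrix.of fun i j => v (i, j)
  invFun X p := X p.1 p.2
  map_add' v w := rfl
  map_smul' c v := rfl
  left_inv v := by funext p; rfl
  right_inv X := by ext i j; rfl

lemma kron_one_mulVecLin (A : Matrix (Fin m) (Fin m) F) :
    (A ⊗ₖ (1 : Matrix (Fin m) (Fin m) F)).mulVecLin
      = (curryM.symm.toLinearMap ∘ₗ lmulL A) ∘ₗ curryM.toLinearMap := by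
  apply LinearMap.ext; intro v
  funext p
  obtain ⟨i, j⟩ := p
  show ((A ⊗ₖ (1 : Matrix (Fin m) (Fin m) F)) *ᵥ v) (i, j) = (A * curryM v) i j
  rw [Matrix.mulVec, dotProduct, Fintype.sum_prod_type]
  simp only [Matrix.kroneckerMap_apply, Matrix.one_apply, mul_ite, mul_one, mul_zero,
    ite_mul, zero_mul]
  rw [Matrix.mul_apply]
  apply Finset.sum_congr rfl
  intro k _
  rw [Finset.sum_ite_eq Finset.univ j (fun l => A i k * v (k, l))]
  simp [curryM]
  exact Or.inl rfl

lemma one_kron_mulVecLin (C : Matrix (Fin m) (Fin m) F) :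
    ((1 : Matrix (Fin m) (Fin m) F) ⊗ₖ C).mulVecLin
      = (curryM.symm.toLinearMap ∘ₗ rmulT C) ∘ₗ curryM.toLinearMap := by
  apply LinearMap.ext; intro v
  funext p
  obtain ⟨i, j⟩ := p
  show (((1 : Matrix (Fin m) (Fin m) F) ⊗ₖ C) *ᵥ v) (i, j) = (curryM v * Cᵀ) i j
  rw [Matrix.mulVec, dotProduct, Fintype.sum_prod_type]
  rw [Matrix.mul_apply]
  rw [Finset.sum_comm]
  apply Finset.sum_congr rfl
  intro l _
  simp only [Matrix.kroneckerMap_apply, Matrix.one_apply, ite_mul, one_mul, zero_mul]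
  rw [Finset.sum_ite_eq Finset.univ i (fun k => C j l * v (k, l))]
  simp [curryM, Matrix.transpose_apply, mul_comm]
  exact Or.inl rfl

lemma range_fromColumns_mulVecLin {p n₁ n₂ : Type*} [Fintype p] [Fintype n₁] [Fintype n₂]
    (M : Matrix p n₁ F) (N : Matrix p n₂ F) :
    LinearMap.range (Matrix.fromCols M N).mulVecLin
      = LinearMap.range M.mulVecLin ⊔ LinearMap.range N.mulVecLin := by
  apply le_antisymm
  · rintro _ ⟨v, rfl⟩
    have hv : v = Sum.elim (v ∘ Sum.inl) (v ∘ Sum.inr) := by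
      funext x; cases x <;> rfl
    rw [Matrix.mulVecLin_apply, hv, Matrix.fromCols_mulVec_sumElim]
    exact Submodule.add_mem_sup ⟨v ∘ Sum.inl, rfl⟩ ⟨v ∘ Sum.inr, rfl⟩
  · rw [sup_le_iff]
    constructor
    · rintro _ ⟨v, rfl⟩
      refine ⟨Sum.elim v 0, ?_⟩
      rw [Matrix.mulVecLin_apply, Matrix.fromCols_mulVec_sumElim]
      simp
    · rintro _ ⟨v, rfl⟩
      refine ⟨Sum.elim 0 v, ?_⟩
      rw [Matrix.mulVecLin_apply, Matrix.fromCols_mulVec_sumElim]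
      simp

lemma finrank_lmulL_sup_rmulT (A C : Matrix (Fin m) (Fin m) F) :
    finrank F ((LinearMap.range (lmulL A) ⊔ LinearMap.range (rmulT C) :
        Submodule F (Matrix (Fin m) (Fin m) F)))
      + C.rank * A.rank = m * A.rank + C.rank * m := by
  rw [range_lmulL, range_rmulT]
  have hP : finrank F ((colsIn (LinearMap.range A.mulVecLin) :
      Submodule F (Matrix (Fin m) (Fin m) F))) = m * A.rank := by
    have := finrank_rowsIn_inf_colsIn (⊤ : Submodule F (Fin m → F))
      (LinearMap.range A.mulVecLin)
    rwa [rowsIn_top, top_inf_eq, finrank_top, finrank_fun] at this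
  have hQ : finrank F ((rowsIn (LinearMap.range C.mulVecLin) :
      Submodule F (Matrix (Fin m) (Fin m) F))) = C.rank * m := by
    have := finrank_rowsIn_inf_colsIn (LinearMap.range C.mulVecLin)
      (⊤ : Submodule F (Fin m → F))
    rwa [colsIn_top, inf_top_eq, finrank_top, finrank_fun] at this
  have hI : finrank F ((rowsIn (LinearMap.range C.mulVecLin)
      ⊓ colsIn (LinearMap.range A.mulVecLin) :
      Submodule F (Matrix (Fin m) (Fin m) F))) = C.rank * A.rank :=
    finrank_rowsIn_inf_colsIn _ _
  have hsum := Submodule.finrank_sup_add_finrank_inf_eq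
    (colsIn (LinearMap.range A.mulVecLin)) (rowsIn (LinearMap.range C.mulVecLin))
  rw [hP, hQ, inf_comm, hI] at hsum
  exact hsum

lemma finrank_kron_sup (A C : Matrix (Fin m) (Fin m) F) :
    finrank F ((LinearMap.range (A ⊗ₖ (1 : Matrix (Fin m) (Fin m) F)).mulVecLin
        ⊔ LinearMap.range ((1 : Matrix (Fin m) (Fin m) F) ⊗ₖ C).mulVecLin :
        Submodule F ((Fin m × Fin m) → F)))
      + C.rank * A.rank = m * A.rank + C.rank * m := by
  have h1 : LinearMap.range (A ⊗ₖ (1 : Matrix (Fin m) (Fin m) F)).mulVecLin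
      = Submodule.map (curryM.symm.toLinearMap :
          Matrix (Fin m) (Fin m) F →ₗ[F] ((Fin m × Fin m) → F)) (LinearMap.range (lmulL A)) := by
    rw [kron_one_mulVecLin, LinearMap.range_comp_of_range_eq_top _ curryM.range,
      LinearMap.range_comp]
  have h2 : LinearMap.range ((1 : Matrix (Fin m) (Fin m) F) ⊗ₖ C).mulVecLin
      = Submodule.map (curryM.symm.toLinearMap :
          Matrix (Fin m) (Fin m) F →ₗ[F] ((Fin m × Fin m) → F)) (LinearMap.range (rmulT C)) := by
    rw [one_kron_mulVecLin, LinearMap.range_comp_of_range_eq_top _ curryM.range,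
      LinearMap.range_comp]
  rw [h1, h2, ← Submodule.map_sup, LinearEquiv.finrank_map_eq]
  exact finrank_lmulL_sup_rmulT A C

end Aux


/-- Let `A, B : Matrix (Fin m) (Fin m) F` over a field `F`, with kernel dimensions
`k_A = m − rank A` and `k_B = m − rank B`. For the lifted-product parity-check matrices
`H_X = [A ⊗ I_m, −(I_m ⊗ B)]` and `H_Z = [I_m ⊗ Bᵀ, Aᵀ ⊗ I_m]` we have
`rank H_X = m² − k_A·k_B` and `rank H_Z = m² − k_A·k_B`
(stated as `rank H_X + k_A·k_B = m²` and `rank H_Z + k_A·k_B = m²`). -/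
theorem rank_liftedProduct_parityChecks {F : Type*} [Field F] {m : ℕ}
    (A B : Matrix (Fin m) (Fin m) F) :
    (Matrix.fromCols (A ⊗ₖ (1 : Matrix (Fin m) (Fin m) F))
          (-((1 : Matrix (Fin m) (Fin m) F) ⊗ₖ B))).rank
        + (m - A.rank) * (m - B.rank) = m ^ 2 ∧
    (Matrix.fromCols ((1 : Matrix (Fin m) (Fin m) F) ⊗ₖ Bᵀ)
          (Aᵀ ⊗ₖ (1 : Matrix (Fin m) (Fin m) F))).rank
        + (m - A.rank) * (m - B.rank) = m ^ 2 := by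
  have hA : A.rank ≤ m := A.rank_le_width
  have hB : B.rank ≤ m := B.rank_le_width
  obtain ⟨a, ha⟩ := Nat.le.dest hA
  obtain ⟨b, hb⟩ := Nat.le.dest hB
  have hma : m - A.rank = a := by omega
  have hmb : m - B.rank = b := by omega
  have hX : (Matrix.fromCols (A ⊗ₖ (1 : Matrix (Fin m) (Fin m) F))
        (-((1 : Matrix (Fin m) (Fin m) F) ⊗ₖ B))).rank
      + B.rank * A.rank = m * A.rank + B.rank * m := by
    have hneg : LinearMap.range (-((1 : Matrix (Fin m) (Fin m) F) ⊗ₖ B)).mulVecLin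
        = LinearMap.range ((1 : Matrix (Fin m) (Fin m) F) ⊗ₖ B).mulVecLin := by
      have : (-((1 : Matrix (Fin m) (Fin m) F) ⊗ₖ B)).mulVecLin
          = -((1 : Matrix (Fin m) (Fin m) F) ⊗ₖ B).mulVecLin := by
        apply LinearMap.ext; intro v
        simp [Matrix.mulVecLin_apply, Matrix.neg_mulVec]
      rw [this, LinearMap.range_neg]
    rw [Matrix.rank, range_fromColumns_mulVecLin, hneg]
    exact finrank_kron_sup A B
  have hZ : (Matrix.fromCols ((1 : Matrix (Fin m) (Fin m) F) ⊗ₖ Bᵀ)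
        (Aᵀ ⊗ₖ (1 : Matrix (Fin m) (Fin m) F))).rank
      + B.rank * A.rank = m * A.rank + B.rank * m := by
    rw [Matrix.rank, range_fromColumns_mulVecLin, sup_comm]
    have := finrank_kron_sup Aᵀ Bᵀ
    rwa [Matrix.rank_transpose, Matrix.rank_transpose] at this
  rw [hma, hmb]
  constructor
  · zify at hX ⊢
    have ha' : (m : ℤ) = A.rank + a := by exact_mod_cast ha.symm
    have hb' : (m : ℤ) = B.rank + b := by exact_mod_cast hb.symm
    nlinarith [hX, ha', hb']
  · zify at hZ ⊢
    have ha' : (m : ℤ) = A.rank + a := by exact_mod_cast ha.symm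
    have hb' : (m : ℤ) = B.rank + b := by exact_mod_cast hb.symm
    nlinarith [hZ, ha', hb']
end

section
/- Let F be a field and A, B : Matrix (Fin m) (Fin m) F. Then the intersection of the ranges of the linear maps on F^{Fin m × Fin m} induced by A ⊗ I_m and by I_m ⊗ B has dimension rank(A)·rank(B): finrank(range((A ⊗ I_m).mulVecLin) ⊓ range((I_m ⊗ B).mulVecLin)) = rank(A)·rank(B). -/
open Matrix
open Kronecker
open TensorProduct

/-- Over a field, every square matrix has a generalized inverse. -/
lemma exists_pinv {F : Type*} [Field F] {m : ℕ} (A : Matrix (Fin m) (Fin m) F) :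
    ∃ A' : Matrix (Fin m) (Fin m) F, A * A' * A = A := by
  set f := A.mulVecLin with hf
  obtain ⟨π, hπ⟩ := (LinearMap.range f).subtype.exists_leftInverse_of_injective
    (Submodule.ker_subtype _)
  obtain ⟨s, hs⟩ := f.rangeRestrict.exists_rightInverse_of_surjective
    (LinearMap.range_rangeRestrict f)
  refine ⟨LinearMap.toMatrix' (s ∘ₗ π), ?_⟩
  have key : f ∘ₗ (s ∘ₗ π) ∘ₗ f = f := by
    refine LinearMap.ext fun x => ?_
    have h1 : π (f x) = f.rangeRestrict x := by
      simpa using LinearMap.congr_fun hπ (f.rangeRestrict x)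
    have h2 : f (s (f.rangeRestrict x)) = f x := by
      have h3 : f.rangeRestrict (s (f.rangeRestrict x)) = f.rangeRestrict x := by
        exact LinearMap.congr_fun hs (f.rangeRestrict x)
      simpa [LinearMap.rangeRestrict] using congr_arg (Subtype.val) h3
    simp [h1, h2]
  have hA : LinearMap.toMatrix' f = A := by
    rw [hf, ← Matrix.toLin'_apply', LinearMap.toMatrix'_toLin']
  have := congr_arg LinearMap.toMatrix' key
  rw [LinearMap.toMatrix'_comp, LinearMap.toMatrix'_comp, hA, ← Matrix.mul_assoc] at this
  exact this

open Matrix Kronecker TensorProduct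

lemma finrank_range_tmap {F V W V' W' : Type*} [Field F]
    [AddCommGroup V] [Module F V] [AddCommGroup W] [Module F W]
    [AddCommGroup V'] [Module F V'] [AddCommGroup W'] [Module F W']
    (f : V →ₗ[F] V') (g : W →ₗ[F] W') :
    Module.finrank F (LinearMap.range (TensorProduct.map f g)) =
      Module.finrank F (LinearMap.range f) * Module.finrank F (LinearMap.range g) := by
  have h : LinearMap.range (TensorProduct.map f g) =
      LinearMap.range (mapIncl (LinearMap.range f) (LinearMap.range g)) := by
    rw [TensorProduct.range_map_eq_span_tmul, TensorProduct.range_mapIncl,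
      Submodule.map₂_eq_span_image2]
    congr 1
    ext t
    constructor
    · rintro ⟨a, b, rfl⟩
      exact Set.mem_image2_of_mem ⟨a, rfl⟩ ⟨b, rfl⟩
    · rintro ⟨a, ⟨x, rfl⟩, b, ⟨y, rfl⟩, rfl⟩
      exact ⟨x, y, rfl⟩
  obtain ⟨l1, hl1⟩ := (LinearMap.range f).subtype.exists_leftInverse_of_injective
    (Submodule.ker_subtype _)
  obtain ⟨l2, hl2⟩ := (LinearMap.range g).subtype.exists_leftInverse_of_injective
    (Submodule.ker_subtype _)
  have hinj : Function.Injective (mapIncl (LinearMap.range f) (LinearMap.range g)) := by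
    have hcomp : (TensorProduct.map l1 l2) ∘ₗ mapIncl (LinearMap.range f) (LinearMap.range g)
        = LinearMap.id := by
      rw [mapIncl, ← TensorProduct.map_comp, hl1, hl2, TensorProduct.map_id]
    intro x y hxy
    have := congr_arg (TensorProduct.map l1 l2) hxy
    simpa using congrArg (fun z => z) (by
      have hx := LinearMap.congr_fun hcomp x
      have hy := LinearMap.congr_fun hcomp y
      simp only [LinearMap.coe_comp, Function.comp_apply, LinearMap.id_coe, id_eq] at hx hy
      rw [← hx, ← hy, this])
  rw [h, ← (LinearEquiv.ofInjective _ hinj).finrank_eq, Module.finrank_tensorProduct]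

/-- For `A, B : Matrix (Fin m) (Fin m) F` over a field `F`, the intersection of the ranges
of the linear maps induced by `A ⊗ I_m` and `I_m ⊗ B` has dimension `rank A · rank B`. -/
theorem finrank_range_kronecker_inf {F : Type*} [Field F] {m : ℕ}
    (A B : Matrix (Fin m) (Fin m) F) :
    Module.finrank F
        ↥(LinearMap.range (A ⊗ₖ (1 : Matrix (Fin m) (Fin m) F)).mulVecLin ⊓
          LinearMap.range ((1 : Matrix (Fin m) (Fin m) F) ⊗ₖ B).mulVecLin) =
      A.rank * B.rank := by
  have hset : LinearMap.range (A ⊗ₖ (1 : Matrix (Fin m) (Fin m) F)).mulVecLin ⊓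
      LinearMap.range ((1 : Matrix (Fin m) (Fin m) F) ⊗ₖ B).mulVecLin
      = LinearMap.range (A ⊗ₖ B).mulVecLin := by
    apply le_antisymm
    · rintro x ⟨⟨u, hu⟩, w, hw⟩
      obtain ⟨A', hA'⟩ := exists_pinv A
      obtain ⟨B', hB'⟩ := exists_pinv B
      have hu' : (A ⊗ₖ (1 : Matrix (Fin m) (Fin m) F)).mulVec u = x := by
        simpa using hu
      have hw' : ((1 : Matrix (Fin m) (Fin m) F) ⊗ₖ B).mulVec w = x := by
        simpa using hw
      have e1 : ((A * A') ⊗ₖ (B * B')) * (A ⊗ₖ (1 : Matrix (Fin m) (Fin m) F))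
          = ((1 : Matrix (Fin m) (Fin m) F) ⊗ₖ (B * B')) *
            (A ⊗ₖ (1 : Matrix (Fin m) (Fin m) F)) := by
        rw [← mul_kronecker_mul, ← mul_kronecker_mul, hA', one_mul]
      have e2 : ((1 : Matrix (Fin m) (Fin m) F) ⊗ₖ (B * B')) *
          ((1 : Matrix (Fin m) (Fin m) F) ⊗ₖ B)
          = (1 : Matrix (Fin m) (Fin m) F) ⊗ₖ B := by
        rw [← mul_kronecker_mul, hB', one_mul]
      refine ⟨(A' ⊗ₖ B').mulVec x, ?_⟩
      show (A ⊗ₖ B).mulVec ((A' ⊗ₖ B').mulVec x) = x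
      rw [mulVec_mulVec, ← mul_kronecker_mul, ← hu', mulVec_mulVec, e1,
        ← mulVec_mulVec, hu', ← hw', mulVec_mulVec, e2]
    · have h1 : (A ⊗ₖ B).mulVecLin
          = (A ⊗ₖ (1 : Matrix (Fin m) (Fin m) F)).mulVecLin ∘ₗ
            ((1 : Matrix (Fin m) (Fin m) F) ⊗ₖ B).mulVecLin := by
        rw [← Matrix.mulVecLin_mul, ← mul_kronecker_mul, mul_one, one_mul]
      have h2 : (A ⊗ₖ B).mulVecLin
          = ((1 : Matrix (Fin m) (Fin m) F) ⊗ₖ B).mulVecLin ∘ₗ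
            (A ⊗ₖ (1 : Matrix (Fin m) (Fin m) F)).mulVecLin := by
        rw [← Matrix.mulVecLin_mul, ← mul_kronecker_mul, mul_one, one_mul]
      refine le_inf ?_ ?_
      · rw [h1]; exact LinearMap.range_comp_le_range _ _
      · rw [h2]; exact LinearMap.range_comp_le_range _ _
  rw [hset]
  have hrk : Module.finrank F ↥(LinearMap.range (A ⊗ₖ B).mulVecLin) = (A ⊗ₖ B).rank := rfl
  set b := Pi.basisFun F (Fin m)
  rw [hrk, Matrix.rank_eq_finrank_range_toLin (A ⊗ₖ B) (b.tensorProduct b) (b.tensorProduct b),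
    Matrix.toLin_kronecker, finrank_range_tmap,
    ← Matrix.rank_eq_finrank_range_toLin A b b, ← Matrix.rank_eq_finrank_range_toLin B b b]
end

section
/- Let F be a field and A, B : Matrix (Fin m) (Fin m) F, with k_A = m − rank(A) and k_B = m − rank(B). Let H_X = [A ⊗ I_m, −(I_m ⊗ B)] and H_Z = [I_m ⊗ Bᵀ, Aᵀ ⊗ I_m]. Then the dimension of the associated CSS (lifted product) code equals 2·k_A·k_B; that is, 2·m² = rank(H_X) + rank(H_Z) + 2·k_A·k_B. -/
open Matrix
open Kronecker

section Aux

variable {F : Type*} [Field F]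

/-- Any square matrix over a field factors as `P * diagonal d * Q` with `P, Q` of unit det. -/
lemma exists_unit_diagonal_unit {n : Type*} [Fintype n] [DecidableEq n] (A : Matrix n n F) :
    ∃ (P Q : Matrix n n F) (d : n → F),
      IsUnit P.det ∧ IsUnit Q.det ∧ A = P * diagonal d * Q := by
  obtain ⟨L, L', d, h⟩ := Matrix.Pivot.exists_list_transvec_mul_diagonal_mul_list_transvec A
  refine ⟨_, _, d, ?_, ?_, h⟩
  · rw [Matrix.TransvectionStruct.det_toMatrix_prod]; exact isUnit_one
  · rw [Matrix.TransvectionStruct.det_toMatrix_prod]; exact isUnit_one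

lemma range_mulVecLin_fromColumns {o n₁ n₂ : Type*} [Fintype o] [Fintype n₁] [Fintype n₂]
    (M : Matrix o n₁ F) (N : Matrix o n₂ F) :
    LinearMap.range (fromCols M N).mulVecLin
      = LinearMap.range M.mulVecLin ⊔ LinearMap.range N.mulVecLin := by
  rw [Matrix.range_mulVecLin, Matrix.range_mulVecLin, Matrix.range_mulVecLin]
  simp only [Matrix.col]
  rw [transpose_fromCols]
  have : Set.range (fromRows Mᵀ Nᵀ) = Set.range Mᵀ ∪ Set.range Nᵀ := by
    exact Set.Sum.elim_range Mᵀ Nᵀ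
  rw [this, Submodule.span_union]

open Classical in
lemma rank_fromColumns_diagonal {ι : Type*} [Fintype ι] [DecidableEq ι] (v w : ι → F) :
    (fromCols (diagonal v) (diagonal w)).rank
      = Fintype.card {i // v i ≠ 0 ∨ w i ≠ 0} := by
  classical
  set u : ι → F := fun i => if v i ≠ 0 ∨ w i ≠ 0 then 1 else 0 with hu
  have hset : {i | u i ≠ 0} = {i | v i ≠ 0} ∪ {i | w i ≠ 0} := by
    ext i
    by_cases h : v i ≠ 0 ∨ w i ≠ 0 <;> simp [hu, h] <;> tauto
  have hrange : LinearMap.range (fromCols (diagonal v) (diagonal w)).mulVecLin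
      = LinearMap.range (diagonal u).mulVecLin := by
    rw [range_mulVecLin_fromColumns, ← Matrix.toLin'_apply', ← Matrix.toLin'_apply',
      ← Matrix.toLin'_apply', Matrix.range_diagonal, Matrix.range_diagonal,
      Matrix.range_diagonal, hset, iSup_union]
  rw [Matrix.rank, hrange, ← Matrix.rank, Matrix.rank_diagonal]
  apply Fintype.card_congr
  apply Equiv.subtypeEquivRight
  intro i
  by_cases h : v i ≠ 0 ∨ w i ≠ 0 <;> simp [hu, h] <;> tauto

open Classical in
lemma card_or_count {m : ℕ} (d e : Fin m → F) :
    Fintype.card {p : Fin m × Fin m // d p.1 ≠ 0 ∨ e p.2 ≠ 0}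
      = m * m - (m - Fintype.card {i // d i ≠ 0}) * (m - Fintype.card {i // e i ≠ 0}) := by
  classical
  have h1 : Fintype.card {p : Fin m × Fin m // d p.1 ≠ 0 ∨ e p.2 ≠ 0}
      = Fintype.card {p : Fin m × Fin m // ¬ (d p.1 = 0 ∧ e p.2 = 0)} := by
    apply Fintype.card_congr
    apply Equiv.subtypeEquivRight
    intro p; tauto
  have h2 : Fintype.card {p : Fin m × Fin m // d p.1 = 0 ∧ e p.2 = 0}
      = Fintype.card ({i : Fin m // d i = 0} × {j : Fin m // e j = 0}) :=
    Fintype.card_congr (Equiv.subtypeProdEquivProd (p := fun i : Fin m => d i = 0) (q := fun j : Fin m => e j = 0))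
  have h3 : Fintype.card {i : Fin m // d i = 0}
      = m - Fintype.card {i : Fin m // d i ≠ 0} := by
    have := Fintype.card_subtype_compl (fun i : Fin m => d i ≠ 0)
    simpa using this
  have h4 : Fintype.card {j : Fin m // e j = 0}
      = m - Fintype.card {j : Fin m // e j ≠ 0} := by
    have := Fintype.card_subtype_compl (fun j : Fin m => e j ≠ 0)
    simpa using this
  rw [h1, Fintype.card_subtype_compl, h2, Fintype.card_prod, Fintype.card_prod, h3, h4,
    Fintype.card_fin]

lemma isUnit_det_kronecker {m : ℕ} {P P' : Matrix (Fin m) (Fin m) F}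
    (hP : IsUnit P.det) (hP' : IsUnit P'.det) : IsUnit (P ⊗ₖ P').det := by
  rw [Matrix.det_kronecker]
  exact (hP.pow _).mul (hP'.pow _)

open Classical in
/-- The key rank computation. -/
lemma rank_fromColumns_kronecker {m : ℕ} (P Q P' Q' : Matrix (Fin m) (Fin m) F)
    (d e : Fin m → F) (hP : IsUnit P.det) (hQ : IsUnit Q.det)
    (hP' : IsUnit P'.det) (hQ' : IsUnit Q'.det) (ε : F) (hε : ε ≠ 0) :
    (fromCols ((P * diagonal d * Q) ⊗ₖ (1 : Matrix (Fin m) (Fin m) F))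
        (ε • ((1 : Matrix (Fin m) (Fin m) F) ⊗ₖ (P' * diagonal e * Q')))).rank
      = m * m - (m - Fintype.card {i // d i ≠ 0}) * (m - Fintype.card {i // e i ≠ 0}) := by
  classical
  set D : Matrix (Fin m) (Fin m) F := diagonal d
  set E : Matrix (Fin m) (Fin m) F := diagonal e
  have h1 : (P * D * Q) ⊗ₖ (1 : Matrix (Fin m) (Fin m) F)
      = (P ⊗ₖ P') * (D ⊗ₖ 1) * (Q ⊗ₖ P'⁻¹) := by
    rw [← Matrix.mul_kronecker_mul, ← Matrix.mul_kronecker_mul, Matrix.mul_one,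
      Matrix.mul_nonsing_inv _ hP']
  have h2 : ε • ((1 : Matrix (Fin m) (Fin m) F) ⊗ₖ (P' * E * Q'))
      = (P ⊗ₖ P') * (1 ⊗ₖ E) * (ε • (P⁻¹ ⊗ₖ Q')) := by
    rw [Matrix.mul_smul, ← Matrix.mul_kronecker_mul, ← Matrix.mul_kronecker_mul, Matrix.mul_one,
      Matrix.mul_nonsing_inv _ hP]
  rw [h1, h2]
  have hfc : Matrix.fromCols ((P ⊗ₖ P') * (D ⊗ₖ 1) * (Q ⊗ₖ P'⁻¹))
        ((P ⊗ₖ P') * (1 ⊗ₖ E) * (ε • (P⁻¹ ⊗ₖ Q')))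
      = (P ⊗ₖ P') * (Matrix.fromCols (D ⊗ₖ (1 : Matrix (Fin m) (Fin m) F)) ((1 : Matrix (Fin m) (Fin m) F) ⊗ₖ E)
          * Matrix.fromBlocks (Q ⊗ₖ P'⁻¹) 0 0 (ε • (P⁻¹ ⊗ₖ Q'))) := by
    rw [Matrix.fromCols_mul_fromBlocks, Matrix.mul_fromCols]
    simp [Matrix.mul_assoc]
  rw [hfc]
  have hUnit1 : IsUnit (P ⊗ₖ P').det := isUnit_det_kronecker hP hP'
  have hPinv : IsUnit (P⁻¹).det :=
    IsUnit.of_mul_eq_one _ (by rw [← Matrix.det_mul, Matrix.nonsing_inv_mul _ hP, Matrix.det_one])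
  have hP'inv : IsUnit (P'⁻¹).det :=
    IsUnit.of_mul_eq_one _ (by rw [← Matrix.det_mul, Matrix.nonsing_inv_mul _ hP', Matrix.det_one])
  have hUnit2 : IsUnit (Matrix.fromBlocks (Q ⊗ₖ P'⁻¹) 0 0 (ε • (P⁻¹ ⊗ₖ Q'))).det := by
    rw [Matrix.det_fromBlocks_zero₂₁, Matrix.det_smul]
    exact (isUnit_det_kronecker hQ hP'inv).mul
      (((isUnit_iff_ne_zero.mpr hε).pow _).mul (isUnit_det_kronecker hPinv hQ'))
  rw [Matrix.rank_mul_eq_right_of_isUnit_det _ _ hUnit1,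
    Matrix.rank_mul_eq_left_of_isUnit_det _ _ hUnit2]
  have hD : D ⊗ₖ (1 : Matrix (Fin m) (Fin m) F)
      = diagonal (fun p : Fin m × Fin m => d p.1) := by
    have : (1 : Matrix (Fin m) (Fin m) F) = diagonal (fun _ => (1 : F)) := by
      simp [Matrix.diagonal_one]
    rw [show D = diagonal d from rfl, this, Matrix.diagonal_kronecker_diagonal]
    simp
  have hE : (1 : Matrix (Fin m) (Fin m) F) ⊗ₖ E
      = diagonal (fun p : Fin m × Fin m => e p.2) := by
    have : (1 : Matrix (Fin m) (Fin m) F) = diagonal (fun _ => (1 : F)) := by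
      simp [Matrix.diagonal_one]
    rw [show E = diagonal e from rfl, this, Matrix.diagonal_kronecker_diagonal]
    simp
  rw [hD, hE, rank_fromColumns_diagonal, card_or_count]

open Classical in
/-- The key rank computation, swapped order. -/
lemma rank_fromColumns_kronecker' {m : ℕ} (P Q P' Q' : Matrix (Fin m) (Fin m) F)
    (d e : Fin m → F) (hP : IsUnit P.det) (hQ : IsUnit Q.det)
    (hP' : IsUnit P'.det) (hQ' : IsUnit Q'.det) :
    (fromCols ((1 : Matrix (Fin m) (Fin m) F) ⊗ₖ (P' * diagonal e * Q'))
        ((P * diagonal d * Q) ⊗ₖ (1 : Matrix (Fin m) (Fin m) F))).rank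
      = m * m - (m - Fintype.card {i // d i ≠ 0}) * (m - Fintype.card {i // e i ≠ 0}) := by
  classical
  set D : Matrix (Fin m) (Fin m) F := diagonal d
  set E : Matrix (Fin m) (Fin m) F := diagonal e
  have h1 : (P * D * Q) ⊗ₖ (1 : Matrix (Fin m) (Fin m) F)
      = (P ⊗ₖ P') * (D ⊗ₖ 1) * (Q ⊗ₖ P'⁻¹) := by
    rw [← Matrix.mul_kronecker_mul, ← Matrix.mul_kronecker_mul, Matrix.mul_one,
      Matrix.mul_nonsing_inv _ hP']
  have h2 : (1 : Matrix (Fin m) (Fin m) F) ⊗ₖ (P' * E * Q')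
      = (P ⊗ₖ P') * (1 ⊗ₖ E) * (P⁻¹ ⊗ₖ Q') := by
    rw [← Matrix.mul_kronecker_mul, ← Matrix.mul_kronecker_mul, Matrix.mul_one,
      Matrix.mul_nonsing_inv _ hP]
  rw [h1, h2]
  have hfc : Matrix.fromCols ((P ⊗ₖ P') * (1 ⊗ₖ E) * (P⁻¹ ⊗ₖ Q'))
        ((P ⊗ₖ P') * (D ⊗ₖ 1) * (Q ⊗ₖ P'⁻¹))
      = (P ⊗ₖ P') * (Matrix.fromCols ((1 : Matrix (Fin m) (Fin m) F) ⊗ₖ E) (D ⊗ₖ (1 : Matrix (Fin m) (Fin m) F))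
          * Matrix.fromBlocks (P⁻¹ ⊗ₖ Q') 0 0 (Q ⊗ₖ P'⁻¹)) := by
    rw [Matrix.fromCols_mul_fromBlocks, Matrix.mul_fromCols]
    simp [Matrix.mul_assoc]
  rw [hfc]
  have hUnit1 : IsUnit (P ⊗ₖ P').det := isUnit_det_kronecker hP hP'
  have hPinv : IsUnit (P⁻¹).det :=
    IsUnit.of_mul_eq_one _ (by rw [← Matrix.det_mul, Matrix.nonsing_inv_mul _ hP, Matrix.det_one])
  have hP'inv : IsUnit (P'⁻¹).det :=
    IsUnit.of_mul_eq_one _ (by rw [← Matrix.det_mul, Matrix.nonsing_inv_mul _ hP', Matrix.det_one])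
  have hUnit2 : IsUnit (Matrix.fromBlocks (P⁻¹ ⊗ₖ Q') 0 0 (Q ⊗ₖ P'⁻¹)).det := by
    rw [Matrix.det_fromBlocks_zero₂₁]
    exact (isUnit_det_kronecker hPinv hQ').mul (isUnit_det_kronecker hQ hP'inv)
  rw [Matrix.rank_mul_eq_right_of_isUnit_det _ _ hUnit1,
    Matrix.rank_mul_eq_left_of_isUnit_det _ _ hUnit2]
  have hD : D ⊗ₖ (1 : Matrix (Fin m) (Fin m) F)
      = diagonal (fun p : Fin m × Fin m => d p.1) := by
    have h1 : (1 : Matrix (Fin m) (Fin m) F) = diagonal (fun _ => (1 : F)) := by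
      simp [Matrix.diagonal_one]
    rw [show D = diagonal d from rfl, h1, Matrix.diagonal_kronecker_diagonal]
    simp
  have hE : (1 : Matrix (Fin m) (Fin m) F) ⊗ₖ E
      = diagonal (fun p : Fin m × Fin m => e p.2) := by
    have h1 : (1 : Matrix (Fin m) (Fin m) F) = diagonal (fun _ => (1 : F)) := by
      simp [Matrix.diagonal_one]
    rw [show E = diagonal e from rfl, h1, Matrix.diagonal_kronecker_diagonal]
    simp
  rw [hD, hE, rank_fromColumns_diagonal]
  have : Fintype.card {p : Fin m × Fin m // e p.2 ≠ 0 ∨ d p.1 ≠ 0}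
      = Fintype.card {p : Fin m × Fin m // d p.1 ≠ 0 ∨ e p.2 ≠ 0} := by
    apply Fintype.card_congr
    apply Equiv.subtypeEquivRight
    intro p; tauto
  rw [this, card_or_count]

end Aux

/-- For `A, B : Matrix (Fin m) (Fin m) F` over a field `F`, with `k_A = m − rank A`,
`k_B = m − rank B`, and `H_X = [A ⊗ I_m, −(I_m ⊗ B)]`, `H_Z = [I_m ⊗ Bᵀ, Aᵀ ⊗ I_m]`,
the dimension of the associated CSS (lifted product) code is `2·k_A·k_B`:
`2·m² = rank H_X + rank H_Z + 2·k_A·k_B`. -/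
theorem dim_liftedProduct_CSS {F : Type*} [Field F] {m : ℕ}
    (A B : Matrix (Fin m) (Fin m) F) :
    2 * m ^ 2 =
      (Matrix.fromCols (A ⊗ₖ (1 : Matrix (Fin m) (Fin m) F))
          (-((1 : Matrix (Fin m) (Fin m) F) ⊗ₖ B))).rank +
      (Matrix.fromCols ((1 : Matrix (Fin m) (Fin m) F) ⊗ₖ Bᵀ)
          (Aᵀ ⊗ₖ (1 : Matrix (Fin m) (Fin m) F))).rank +
      2 * ((m - A.rank) * (m - B.rank)) := by
  classical
  obtain ⟨P, Q, d, hP, hQ, hA⟩ := exists_unit_diagonal_unit A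
  obtain ⟨P', Q', e, hP', hQ', hB⟩ := exists_unit_diagonal_unit B
  -- ranks of A and B
  have hrankA : A.rank = Fintype.card {i // d i ≠ 0} := by
    rw [hA, Matrix.rank_mul_eq_left_of_isUnit_det _ _ hQ,
      Matrix.rank_mul_eq_right_of_isUnit_det _ _ hP, Matrix.rank_diagonal]
  have hrankB : B.rank = Fintype.card {i // e i ≠ 0} := by
    rw [hB, Matrix.rank_mul_eq_left_of_isUnit_det _ _ hQ',
      Matrix.rank_mul_eq_right_of_isUnit_det _ _ hP', Matrix.rank_diagonal]
  -- rank of H_X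
  have hneg : -((1 : Matrix (Fin m) (Fin m) F) ⊗ₖ B)
      = (-1 : F) • ((1 : Matrix (Fin m) (Fin m) F) ⊗ₖ B) := by
    simp
  have hX : (Matrix.fromCols (A ⊗ₖ (1 : Matrix (Fin m) (Fin m) F))
        (-((1 : Matrix (Fin m) (Fin m) F) ⊗ₖ B))).rank
      = m * m - (m - Fintype.card {i // d i ≠ 0}) * (m - Fintype.card {i // e i ≠ 0}) := by
    rw [hneg, hA, hB]
    exact rank_fromColumns_kronecker P Q P' Q' d e hP hQ hP' hQ' (-1) (by norm_num)
  -- rank of H_Z : fromCols (1 ⊗ Bᵀ) (Aᵀ ⊗ 1)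
  -- with Bᵀ = Q'ᵀ * diagonal e * P'ᵀ and Aᵀ = Qᵀ * diagonal d * Pᵀ
  have hAT : Aᵀ = Qᵀ * diagonal d * Pᵀ := by
    rw [hA]; rw [Matrix.transpose_mul, Matrix.transpose_mul, Matrix.diagonal_transpose,
      Matrix.mul_assoc]
  have hBT : Bᵀ = Q'ᵀ * diagonal e * P'ᵀ := by
    rw [hB]; rw [Matrix.transpose_mul, Matrix.transpose_mul, Matrix.diagonal_transpose,
      Matrix.mul_assoc]
  have hQT : IsUnit Qᵀ.det := by rwa [Matrix.det_transpose]
  have hPT : IsUnit Pᵀ.det := by rwa [Matrix.det_transpose]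
  have hQ'T : IsUnit Q'ᵀ.det := by rwa [Matrix.det_transpose]
  have hP'T : IsUnit P'ᵀ.det := by rwa [Matrix.det_transpose]
  have hone : ((1:F) • (Aᵀ ⊗ₖ (1 : Matrix (Fin m) (Fin m) F)))
      = Aᵀ ⊗ₖ (1 : Matrix (Fin m) (Fin m) F) := one_smul _ _
  have hZ : (Matrix.fromCols ((1 : Matrix (Fin m) (Fin m) F) ⊗ₖ Bᵀ)
        (Aᵀ ⊗ₖ (1 : Matrix (Fin m) (Fin m) F))).rank
      = m * m - (m - Fintype.card {i // d i ≠ 0}) * (m - Fintype.card {i // e i ≠ 0}) := by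
    rw [hAT, hBT]
    exact rank_fromColumns_kronecker' Qᵀ Pᵀ Q'ᵀ P'ᵀ d e hQT hPT hQ'T hP'T
  rw [hX, hZ, hrankA, hrankB]
  have hle : (m - Fintype.card {i // d i ≠ 0}) * (m - Fintype.card {i // e i ≠ 0}) ≤ m * m :=
    Nat.mul_le_mul (Nat.sub_le _ _) (Nat.sub_le _ _)
  have hpow : m ^ 2 = m * m := sq m
  omega
end

section
/- Let G be a finite group, H a subgroup of G, and F a field. Let I be a left ideal of the group algebra F[H] (an F-subspace of F[H] closed under left multiplication by every element of F[H]), and let C be the left ideal of F[G] generated by the image of I under the algebra homomorphism F[H] → F[G] induced by the inclusion H ↪ G. Then the F-dimension of C equals the index of H in G times the F-dimension of I: finrank_F C = [G : H] · finrank_F I. -/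
open MonoidAlgebra

section Aux

variable {F : Type*} [Field F] {G : Type*} [Group G] (H : Subgroup G)
  (I : Submodule (MonoidAlgebra F H) (MonoidAlgebra F H))

/-- `G ≃ (G⧸H) × H` via coset representatives `Quotient.out`. -/
noncomputable def cosetEquivAux : G ≃ (G ⧸ H) × H where
  toFun g := (↑g, ⟨((↑g : G ⧸ H).out)⁻¹ * g, by
    have := QuotientGroup.out_eq' (↑g : G ⧸ H)
    exact (QuotientGroup.eq.mp this)⟩)
  invFun p := p.1.out * ↑p.2
  left_inv g := by simp
  right_inv p := by
    have h1 : ((↑(p.1.out * ↑p.2) : G ⧸ H)) = p.1 := by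
      rw [QuotientGroup.mk_mul_of_mem _ p.2.2, QuotientGroup.out_eq']
    ext
    · exact h1
    · simp [h1]

noncomputable def phiAux (q : G ⧸ H) : ↥(I.restrictScalars F) →ₗ[F] MonoidAlgebra F G :=
  (LinearMap.mulLeft F (single q.out 1)).comp
    ((mapDomainAlgHom F F H.subtype).toLinearMap.comp (Submodule.subtype _))

noncomputable def PhiMap : ((G ⧸ H) →₀ ↥(I.restrictScalars F)) →ₗ[F] MonoidAlgebra F G :=
  Finsupp.lsum F (phiAux H I)

noncomputable def eEquiv : MonoidAlgebra F G ≃ₗ[F] ((G ⧸ H) →₀ MonoidAlgebra F H) :=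
  (MonoidAlgebra.coeffLinearEquiv F).trans ((Finsupp.domLCongr (cosetEquivAux H)).trans
    ((Finsupp.finsuppProdLEquiv F).trans
      (Finsupp.mapRange.linearEquiv (MonoidAlgebra.coeffLinearEquiv F).symm)))

theorem eEquiv_phiAux (q : G ⧸ H) (x : ↥(I.restrictScalars F)) :
    eEquiv H (phiAux H I q x) = Finsupp.single q (↑x : MonoidAlgebra F H) := by
  ext q' h
  have happ : (eEquiv H (phiAux H I q x) q').coeff h =
      (phiAux H I q x).coeff (q'.out * ↑h) := by
    rfl
  rw [happ]
  have hphi : (phiAux H I q x).coeff (q'.out * ↑h) =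
      (Finsupp.mapDomain H.subtype (↑x : MonoidAlgebra F H).coeff) (q.out⁻¹ * (q'.out * ↑h)) := by
    simp [phiAux, MonoidAlgebra.coeff_single_mul_apply, mapDomainAlgHom_apply]
  rw [hphi]
  rcases eq_or_ne q' q with rfl | hne
  · rw [inv_mul_cancel_left]
    rw [show (↑h : G) = H.subtype h from rfl,
      Finsupp.mapDomain_apply H.subtype_injective]
    simp
  · have hnot : q.out⁻¹ * (q'.out * ↑h) ∉ Set.range H.subtype := by
      rintro ⟨a, ha⟩
      apply hne
      have : q.out⁻¹ * q'.out ∈ H := by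
        have : q.out⁻¹ * (q'.out * ↑h) ∈ H := ha ▸ a.2
        have := H.mul_mem this (H.inv_mem h.2)
        simpa [mul_assoc] using this
      have := QuotientGroup.eq.mpr this
      rw [QuotientGroup.out_eq', QuotientGroup.out_eq'] at this
      exact this.symm
    rw [Finsupp.mapDomain_notin_range _ _ hnot, Finsupp.single_eq_of_ne hne]
    rfl

theorem PhiMap_injective : Function.Injective (PhiMap H I) := by
  have hcomp : ∀ f, eEquiv H (PhiMap H I f) =
      Finsupp.mapRange.linearMap (Submodule.subtype (I.restrictScalars F)) f := by
    intro f
    induction f using Finsupp.induction_linear with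
    | zero => simp
    | add f g hf hg => simp [map_add, hf, hg]
    | single q x =>
      rw [show PhiMap H I (Finsupp.single q x) = phiAux H I q x by
        simp [PhiMap]]
      rw [eEquiv_phiAux]
      simp
  intro f g hfg
  have := congrArg (eEquiv H) hfg
  rw [hcomp, hcomp] at this
  simp only [Finsupp.mapRange.linearMap_apply] at this
  exact Finsupp.mapRange_injective _ (map_zero _) (Submodule.injective_subtype _) this

theorem phiAux_apply (q : G ⧸ H) (x : ↥(I.restrictScalars F)) :
    phiAux H I q x = single q.out 1 * mapDomainAlgHom F F H.subtype (↑x) := rfl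

theorem PhiMap_single (q : G ⧸ H) (x : ↥(I.restrictScalars F)) :
    PhiMap H I (Finsupp.single q x) = phiAux H I q x := by simp [PhiMap]

theorem PhiMap_smul_mem (g : G) (f : (G ⧸ H) →₀ ↥(I.restrictScalars F)) :
    single g (1 : F) * PhiMap H I f ∈ LinearMap.range (PhiMap H I) := by
  induction f using Finsupp.induction_linear with
  | zero => simp
  | add f f' hf hf' => rw [map_add, mul_add]; exact add_mem hf hf'
  | single q x =>
    rw [PhiMap_single, phiAux_apply]
    set q' : G ⧸ H := ↑(g * q.out) with hq'
    have hmem : q'.out⁻¹ * (g * q.out) ∈ H :=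
      QuotientGroup.eq.mp (QuotientGroup.out_eq' q')
    set h : H := ⟨_, hmem⟩ with hh
    have hdec : g * q.out = q'.out * ↑h := by
      rw [hh]
      simp [mul_inv_cancel_left]
    have hxI : single h (1 : F) * (↑x : MonoidAlgebra F H) ∈ I := by
      have := I.smul_mem (single h (1 : F)) x.2
      simpa [smul_eq_mul] using this
    refine ⟨Finsupp.single q' ⟨_, hxI⟩, ?_⟩
    rw [PhiMap_single, phiAux_apply]
    have hΩ : (mapDomainAlgHom F F H.subtype) (single h (1 : F))
        = single (↑h : G) (1 : F) := by
      simp [mapDomainAlgHom_apply, Finsupp.mapDomain_single]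
    rw [show ((⟨single h (1 : F) * (↑x : MonoidAlgebra F H), hxI⟩ :
        ↥(I.restrictScalars F)) : MonoidAlgebra F H)
      = single h (1 : F) * (↑x : MonoidAlgebra F H) from rfl]
    rw [map_mul, hΩ, ← mul_assoc, ← mul_assoc, MonoidAlgebra.single_mul_single,
      MonoidAlgebra.single_mul_single, one_mul, ← hdec]

theorem PhiMap_range : (LinearMap.range (PhiMap H I) : Set (MonoidAlgebra F G)) =
    ((Submodule.span (MonoidAlgebra F G)
      ((MonoidAlgebra.mapDomainAlgHom F F H.subtype) '' (I : Set (MonoidAlgebra F H)))) :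
        Set (MonoidAlgebra F G)) := by
  apply Set.Subset.antisymm
  · rintro _ ⟨f, rfl⟩
    induction f using Finsupp.induction_linear with
    | zero => simp only [map_zero]; exact Submodule.zero_mem _
    | add f f' hf hf' =>
      rw [map_add]
      exact Submodule.add_mem _ hf hf'
    | single q x =>
      rw [PhiMap_single, phiAux_apply]
      have hx : (mapDomainAlgHom F F H.subtype) (↑x : MonoidAlgebra F H) ∈
          Submodule.span (MonoidAlgebra F G)
            ((mapDomainAlgHom F F H.subtype) '' (I : Set (MonoidAlgebra F H))) :=
        Submodule.subset_span ⟨↑x, x.2, rfl⟩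
      have := Submodule.smul_mem _ (single q.out (1 : F)) hx
      simpa [smul_eq_mul] using this
  · let P : Submodule (MonoidAlgebra F G) (MonoidAlgebra F G) :=
      { carrier := LinearMap.range (PhiMap H I)
        add_mem' := fun ha hb => add_mem ha hb
        zero_mem' := zero_mem _
        smul_mem' := by
          intro a x hx
          obtain ⟨f, rfl⟩ := hx
          rw [smul_eq_mul]
          induction a using MonoidAlgebra.induction_on with
          | of g => exact PhiMap_smul_mem H I g f
          | add a b ha hb =>
            rw [add_mul]
            exact add_mem ha hb
          | smul r a ha =>
            rw [smul_mul_assoc]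
            exact Submodule.smul_mem _ r ha }
    have hsub : (mapDomainAlgHom F F H.subtype) '' (I : Set (MonoidAlgebra F H)) ⊆ P := by
      rintro _ ⟨y, hy, rfl⟩
      set q0 : G ⧸ H := ↑(1 : G) with hq0
      have hmem : q0.out⁻¹ * (1 : G) ∈ H :=
        QuotientGroup.eq.mp (QuotientGroup.out_eq' q0)
      have hinv : q0.out⁻¹ ∈ H := by simpa using hmem
      have hP : PhiMap H I (Finsupp.single q0 ⟨y, hy⟩) ∈ P := ⟨_, rfl⟩
      have heq : (mapDomainAlgHom F F H.subtype) y =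
          single q0.out⁻¹ (1 : F) • PhiMap H I (Finsupp.single q0 ⟨y, hy⟩) := by
        rw [smul_eq_mul, PhiMap_single, phiAux_apply, ← mul_assoc,
          MonoidAlgebra.single_mul_single, one_mul, inv_mul_cancel,
          ← MonoidAlgebra.one_def, one_mul]
      rw [heq]
      exact P.smul_mem _ hP
    intro x hx
    exact Submodule.span_le.mpr hsub hx

end Aux

/-- Let `G` be a finite group, `H ≤ G` a subgroup, and `F` a field. Let `I` be a left
ideal of the group algebra `F[H]`, and let `C` be the left ideal of `F[G]` generated by
the image of `I` under the algebra homomorphism `Ω : F[H] → F[G]` induced by the inclusion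
`H ↪ G`. Then `finrank_F C = [G : H] · finrank_F I`. -/
theorem finrank_induced_code {F : Type*} [Field F] {G : Type*} [Group G] [Fintype G]
    (H : Subgroup G) (I : Submodule (MonoidAlgebra F H) (MonoidAlgebra F H)) :
    Module.finrank F
        ↥((Submodule.span (MonoidAlgebra F G)
            ((MonoidAlgebra.mapDomainAlgHom F F H.subtype) ''
              (I : Set (MonoidAlgebra F H)))).restrictScalars F) =
      H.index * Module.finrank F ↥(I.restrictScalars F) := by
  classical
  have : Fintype (G ⧸ H) := Fintype.ofFinite _
  have hrange : LinearMap.range (PhiMap H I) =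
      (Submodule.span (MonoidAlgebra F G)
        ((MonoidAlgebra.mapDomainAlgHom F F H.subtype) ''
          (I : Set (MonoidAlgebra F H)))).restrictScalars F := by
    apply SetLike.coe_injective
    exact PhiMap_range H I
  rw [← hrange]
  have hfr : Module.finrank F ((G ⧸ H) →₀ ↥(I.restrictScalars F)) =
      Module.finrank F ↥(LinearMap.range (PhiMap H I)) :=
    LinearEquiv.finrank_eq (LinearEquiv.ofInjective (PhiMap H I) (PhiMap_injective H I))
  rw [← hfr]
  have hfree : Module.Free F ↥(I.restrictScalars F) := Module.Free.of_divisionRing F _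
  have hfin : Module.finrank F ((G ⧸ H) →₀ ↥(I.restrictScalars F)) =
      Fintype.card (G ⧸ H) * Module.finrank F ↥(I.restrictScalars F) := by
    rw [Module.finrank, Module.finrank, rank_finsupp _, Cardinal.toNat_mul,
      Cardinal.toNat_lift, Cardinal.toNat_lift, Cardinal.mk_toNat_eq_card]
  rw [hfin]
  congr 1
  rw [Subgroup.index, Nat.card_eq_fintype_card]
end

section
/- Let G be a finite group, H a subgroup of G, and F a field. Let I be a nonzero left ideal of the group algebra F[H], and let C be the left ideal of F[G] generated by the image of I under the algebra homomorphism F[H] → F[G] induced by the inclusion H ↪ G. Then C is nonzero and the minimum Hamming weight of a nonzero element of C equals the minimum Hamming weight of a nonzero element of I: min{|supp(x)| : x ∈ C, x ≠ 0} = min{|supp(c)| : c ∈ I, c ≠ 0}. -/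
open MonoidAlgebra

section Aux

variable {F : Type*} [Field F] {G : Type*} [Group G] (H : Subgroup G)

private lemma coset_inj (g : G) : Function.Injective (fun h : H => g * (h : G)) :=
  fun a b hab => Subtype.ext (mul_left_cancel hab)

/-- Restriction of `x : F[G]` to the coset `gH`, as an element of `F[H]`. -/
noncomputable def cosetSlice (g : G) : MonoidAlgebra F G →+ MonoidAlgebra F H :=
  MonoidAlgebra.comapDomainAddMonoidHom (fun h : H => g * (h : G)) (coset_inj H g)

lemma cosetSlice_apply (g : G) (x : MonoidAlgebra F G) (h : H) :
    (cosetSlice H g x).coeff h = x.coeff (g * h) := rfl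

lemma cosetSlice_single_mul (g a : G) (r : F) (x : MonoidAlgebra F G) :
    cosetSlice H g (MonoidAlgebra.single a r * x) =
      MonoidAlgebra.single (1 : H) r * cosetSlice H (a⁻¹ * g) x := by
  ext h
  rw [cosetSlice_apply, MonoidAlgebra.coeff_single_mul_apply, MonoidAlgebra.coeff_single_mul_apply,
    cosetSlice_apply, inv_one, one_mul, mul_assoc]

lemma cosetSlice_mapDomain_of_mem (g : G) (hg : g ∈ H) (c : MonoidAlgebra F H) :
    cosetSlice H g (MonoidAlgebra.mapDomain (H.subtype) c) =
      MonoidAlgebra.single ((⟨g, hg⟩ : H)⁻¹) 1 * c := by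
  ext h
  rw [cosetSlice_apply, MonoidAlgebra.coeff_single_mul_apply, inv_inv, one_mul]
  exact Finsupp.mapDomain_apply (fun a b hab => Subtype.ext hab) c.coeff ((⟨g, hg⟩ : H) * h)

lemma cosetSlice_mapDomain_of_not_mem (g : G) (hg : g ∉ H) (c : MonoidAlgebra F H) :
    cosetSlice H g (MonoidAlgebra.mapDomain (H.subtype) c) = 0 := by
  ext h
  rw [cosetSlice_apply]
  rw [MonoidAlgebra.mapDomain, MonoidAlgebra.coeff_ofCoeff, Finsupp.mapDomain_notin_range]
  · rfl
  · rintro ⟨k, hk⟩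
    apply hg
    have hk' : (k : G) = g * (h : G) := hk
    have : g = (k : G) * (h : G)⁻¹ := by rw [hk']; group
    rw [this]
    exact mul_mem k.2 (inv_mem h.2)

lemma card_support_cosetSlice_le (g : G) (x : MonoidAlgebra F G) :
    (cosetSlice H g x).coeff.support.card ≤ x.coeff.support.card := by
  apply Finset.card_le_card_of_injOn (fun h : H => g * (h : G))
  · intro h hh
    simpa [Finsupp.mem_support_iff, cosetSlice_apply] using hh
  · exact (coset_inj H g).injOn

/-- The key lemma: every coset slice of an element of the induced code lies in `I`. -/
lemma cosetSlice_mem_of_mem_span (I : Submodule (MonoidAlgebra F H) (MonoidAlgebra F H))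
    {x : MonoidAlgebra F G}
    (hx : x ∈ Submodule.span (MonoidAlgebra F G)
      ((MonoidAlgebra.mapDomainAlgHom F F H.subtype) '' (I : Set (MonoidAlgebra F H))))
    (g : G) : cosetSlice H g x ∈ I := by
  induction hx using Submodule.span_induction generalizing g with
  | mem y hy =>
      obtain ⟨c, hc, rfl⟩ := hy
      have : (MonoidAlgebra.mapDomainAlgHom F F H.subtype) c =
          MonoidAlgebra.mapDomain (H.subtype) c := rfl
      rw [this]
      by_cases hg : g ∈ H
      · rw [cosetSlice_mapDomain_of_mem H g hg]
        exact I.smul_mem _ hc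
      · rw [cosetSlice_mapDomain_of_not_mem H g hg]
        exact I.zero_mem
  | zero => simpa using I.zero_mem
  | add y z _ _ hy hz =>
      rw [map_add]
      exact I.add_mem (hy g) (hz g)
  | smul r y _ hy =>
      have hr : r • y = r.coeff.sum fun a ra => MonoidAlgebra.single a ra * y := by
        rw [smul_eq_mul, ← Finsupp.sum_mul]
        congr 1
        exact (MonoidAlgebra.sum_coeff_single r).symm
      rw [hr, map_finsuppSum]
      refine Submodule.sum_mem I fun a ha => ?_
      show cosetSlice H g (MonoidAlgebra.single a (r.coeff a) * y) ∈ I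
      rw [cosetSlice_single_mul]
      exact I.smul_mem _ (hy (a⁻¹ * g))

end Aux

/-- Let `G` be a finite group, `H ≤ G` a subgroup, and `F` a field. Let `I` be a nonzero
left ideal of `F[H]` and `C` the left ideal of `F[G]` generated by the image of `I` under
the algebra homomorphism `Ω : F[H] → F[G]` induced by the inclusion. Then `C` is nonzero
and the minimum Hamming weight of a nonzero element of `C` equals the minimum Hamming
weight of a nonzero element of `I`. -/
theorem minWeight_induced_code {F : Type*} [Field F] {G : Type*} [Group G] [Fintype G]
    (H : Subgroup G) (I : Submodule (MonoidAlgebra F H) (MonoidAlgebra F H))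
    (hI : I ≠ ⊥) :
    Submodule.span (MonoidAlgebra F G)
        ((MonoidAlgebra.mapDomainAlgHom F F H.subtype) ''
          (I : Set (MonoidAlgebra F H))) ≠ ⊥ ∧
    sInf {n : ℕ | ∃ x ∈ Submodule.span (MonoidAlgebra F G)
          ((MonoidAlgebra.mapDomainAlgHom F F H.subtype) ''
            (I : Set (MonoidAlgebra F H))), x ≠ 0 ∧ x.coeff.support.card = n} =
      sInf {n : ℕ | ∃ c ∈ I, c ≠ 0 ∧ c.coeff.support.card = n} := by
  classical
  obtain ⟨c₀, hc₀I, hc₀⟩ := (Submodule.ne_bot_iff I).mp hI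
  have hsub : Function.Injective (H.subtype : H → G) := fun a b hab => Subtype.ext hab
  -- basic facts about Ω
  have hΩ_apply : ∀ c : MonoidAlgebra F H,
      (MonoidAlgebra.mapDomainAlgHom F F H.subtype) c = MonoidAlgebra.mapDomain (H.subtype) c :=
    fun _ => rfl
  have hΩ_ne : ∀ c : MonoidAlgebra F H, c ≠ 0 →
      (MonoidAlgebra.mapDomainAlgHom F F H.subtype) c ≠ 0 := by
    intro c hc hc'
    exact hc (MonoidAlgebra.mapDomain_injective hsub (by simpa [hΩ_apply] using hc'))
  have hΩ_card : ∀ c : MonoidAlgebra F H,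
      ((MonoidAlgebra.mapDomainAlgHom F F H.subtype) c).coeff.support.card = c.coeff.support.card := by
    intro c
    rw [hΩ_apply, MonoidAlgebra.mapDomain, MonoidAlgebra.coeff_ofCoeff, Finsupp.mapDomain_support_of_injective hsub,
      Finset.card_image_of_injective _ hsub]
  have hΩ_mem : ∀ c ∈ I, (MonoidAlgebra.mapDomainAlgHom F F H.subtype) c ∈
      Submodule.span (MonoidAlgebra F G)
        ((MonoidAlgebra.mapDomainAlgHom F F H.subtype) '' (I : Set (MonoidAlgebra F H))) :=
    fun c hc => Submodule.subset_span ⟨c, hc, rfl⟩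
  constructor
  · intro hbot
    exact hΩ_ne c₀ hc₀ (by
      have := hΩ_mem c₀ hc₀I
      rw [hbot] at this
      simpa using this)
  · set SC := {n : ℕ | ∃ x ∈ Submodule.span (MonoidAlgebra F G)
        ((MonoidAlgebra.mapDomainAlgHom F F H.subtype) '' (I : Set (MonoidAlgebra F H))),
        x ≠ 0 ∧ x.coeff.support.card = n} with hSC
    set SI := {n : ℕ | ∃ c ∈ I, c ≠ 0 ∧ c.coeff.support.card = n} with hSI
    have hSCne : SC.Nonempty :=
      ⟨c₀.coeff.support.card, (MonoidAlgebra.mapDomainAlgHom F F H.subtype) c₀,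
        hΩ_mem c₀ hc₀I, hΩ_ne c₀ hc₀, hΩ_card c₀⟩
    have hSIne : SI.Nonempty := ⟨c₀.coeff.support.card, c₀, hc₀I, hc₀, rfl⟩
    -- every element of SC is at least sInf SI
    have key : ∀ n ∈ SC, sInf SI ≤ n := by
      rintro n ⟨x, hxmem, hxne, rfl⟩
      obtain ⟨g, hg⟩ := Finsupp.support_nonempty_iff.mpr (fun h => hxne (MonoidAlgebra.coeff_injective h))
      have hslice : cosetSlice H g x ∈ I := cosetSlice_mem_of_mem_span H I hxmem g
      have hslicene : cosetSlice H g x ≠ 0 := by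
        intro h0
        have : (cosetSlice H g x).coeff (1 : H) = 0 := by rw [h0]; rfl
        rw [cosetSlice_apply] at this
        simp only [OneMemClass.coe_one, mul_one] at this
        exact (Finsupp.mem_support_iff.mp hg) this
      calc sInf SI ≤ (cosetSlice H g x).coeff.support.card :=
            Nat.sInf_le ⟨cosetSlice H g x, hslice, hslicene, rfl⟩
        _ ≤ x.coeff.support.card := card_support_cosetSlice_le H g x
    apply le_antisymm
    · -- sInf SC ≤ sInf SI : the minimizer of SI maps into SC with same weight
      obtain ⟨c, hcI, hcne, hcard⟩ := Nat.sInf_mem hSIne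
      exact Nat.sInf_le ⟨(MonoidAlgebra.mapDomainAlgHom F F H.subtype) c,
        hΩ_mem c hcI, hΩ_ne c hcne, by rw [hΩ_card c, hcard]⟩
    · exact key _ (Nat.sInf_mem hSCne)
end

section
/- Let G be a finite abelian group, F a field, A ∈ Mat_{m_A × m_A}(F[G]) and B ∈ Mat_{m_B × m_B}(F[G]). Suppose the flattened matrix A♭ : Matrix (Fin m_A × G) (Fin m_A × G) F with entries A♭((i,g),(j,h)) = (A i j)(h·g⁻¹) has trivial kernel (A♭ · c = 0 implies c = 0), and likewise the flattened matrix B♭ with entries B♭((k,g),(l,h)) = (B k l)(h⁻¹·g) has trivial kernel. Then the lifted product code LP(A,B) has dimension zero; that is, the flattened lifted-product parity-check matrices H_X, H_Z (which here both have 2·m_A·m_B·|G| columns) satisfy rank(H_X) + rank(H_Z) = 2·m_A·m_B·|G|. -/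
open Matrix

/-- If the rows of `M` are linearly independent then its rank is the number of rows. -/
lemma rank_eq_card_rows_of_vecMul_inj {F : Type*} [Field F] {m n : Type*}
    [Fintype m] [Fintype n] (M : Matrix m n F)
    (h : ∀ x : m → F, x ᵥ* M = 0 → x = 0) : M.rank = Fintype.card m := by
  rw [← Matrix.rank_transpose]
  have hinj : Function.Injective Mᵀ.mulVecLin := by
    intro x y hxy
    have hz : x - y = 0 := by
      apply h
      have h2 : Mᵀ.mulVecLin (x - y) = 0 := by rw [map_sub, hxy, sub_self]
      simpa [Matrix.mulVecLin_apply, Matrix.mulVec_transpose, Matrix.sub_vecMul] using h2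
    exact sub_eq_zero.mp hz
  rw [Matrix.rank, LinearMap.finrank_range_of_inj hinj,
    Module.finrank_fintype_fun_eq_card]

/-- Let `G` be a finite abelian group and `A`, `B` square matrices over `F[G]` whose
flattened classical parity-check matrices `A♭`, `B♭` have trivial kernel. Then the lifted
product code `LP(A,B)` has dimension zero: `rank H_X + rank H_Z = 2·m_A·m_B·|G|`. -/
theorem liftedProduct_dim_zero_of_trivial_kernels {F : Type*} [Field F]
    {G : Type*} [CommGroup G] [Fintype G] {mA mB : ℕ}
    (A : Matrix (Fin mA) (Fin mA) (MonoidAlgebra F G))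
    (B : Matrix (Fin mB) (Fin mB) (MonoidAlgebra F G))
    (hA : ∀ c : Fin mA × G → F,
      (Matrix.of fun p q : Fin mA × G => (A p.1 q.1).coeff (q.2 * p.2⁻¹)).mulVec c = 0 → c = 0)
    (hB : ∀ c : Fin mB × G → F,
      (Matrix.of fun p q : Fin mB × G => (B p.1 q.1).coeff (q.2⁻¹ * p.2)).mulVec c = 0 → c = 0) :
    (liftedHX A B).rank + (liftedHZ A B).rank = 2 * mA * mB * Fintype.card G := by
  classical
  set Ab : Matrix (Fin mA × G) (Fin mA × G) F :=
    Matrix.of fun p q : Fin mA × G => (A p.1 q.1).coeff (q.2 * p.2⁻¹) with hAb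
  have hdetA : Ab.det ≠ 0 := by
    intro hd
    obtain ⟨v, hv0, hv⟩ := Matrix.exists_mulVec_eq_zero_iff.mpr hd
    exact hv0 (hA v hv)
  have hAleft : ∀ y : Fin mA × G → F, y ᵥ* Ab = 0 → y = 0 := by
    intro y hy
    by_contra h0
    exact hdetA (Matrix.exists_vecMul_eq_zero_iff.mp ⟨y, h0, hy⟩)
  have hXinj : ∀ x : (Fin mA × Fin mB) × G → F, x ᵥ* (liftedHX A B) = 0 → x = 0 := by
    intro x hx
    funext ⟨⟨i, k⟩, g⟩
    have hslice : (fun p : Fin mA × G => x ((p.1, k), p.2)) = 0 := by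
      apply hAleft
      funext ⟨j, h⟩
      have key := congrFun hx (Sum.inl (j, k), h)
      simp only [Matrix.vecMul, dotProduct, liftedHX, Matrix.of_apply,
        Pi.zero_apply, Fintype.sum_prod_type, mul_ite, mul_zero,
        Finset.sum_ite_irrel, Finset.sum_const_zero, Finset.sum_ite_eq',
        Finset.mem_univ, if_true] at key
      simp only [Matrix.vecMul, dotProduct, hAb, Matrix.of_apply,
        Pi.zero_apply, Fintype.sum_prod_type]
      exact key
    exact congrFun hslice (i, g)
  have hZinj : ∀ x : (Fin mA × Fin mB) × G → F, x ᵥ* (liftedHZ A B) = 0 → x = 0 := by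
    intro x hx
    funext ⟨⟨j, l⟩, g⟩
    have hslice : (fun p : Fin mB × G => x ((j, p.1), p.2)) = 0 := by
      apply hB
      funext ⟨k, h⟩
      have key := congrFun hx (Sum.inl (j, k), h)
      simp only [Matrix.vecMul, dotProduct, liftedHZ, Matrix.of_apply,
        Pi.zero_apply, Fintype.sum_prod_type, mul_ite, mul_zero,
        Finset.sum_ite_irrel, Finset.sum_const_zero, Finset.sum_ite_eq,
        Finset.sum_ite_eq', Finset.mem_univ, if_true] at key
      simp only [Matrix.mulVec, dotProduct, Matrix.of_apply,
        Pi.zero_apply, Fintype.sum_prod_type]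
      simpa [mul_comm] using key
    exact congrFun hslice (l, g)
  have h1 := rank_eq_card_rows_of_vecMul_inj _ hXinj
  have h2 := rank_eq_card_rows_of_vecMul_inj _ hZinj
  rw [h1, h2]
  simp only [Fintype.card_prod, Fintype.card_fin]
  ring
end
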